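/- arXiv:2010.10628 — 4 statements merged into one kernel-verified Lean document; each statement's English description precedes it below -/
import Mathlib

section
/- Let F : ℝ^n → ℝ^n be the saddle-gradient field F(x,y) = (∇_x L(x,y), −∇_y L(x,y)) of a twice differentiable function L, and let z* satisfy F(z*) = 0. Write A = ∇²_{xx}L(z*), B = ∇²_{xy}L(z*), C = −∇²_{yy}L(z*). Then the Jacobian of G(z) = −F(z) − (s/2)∇F(z)F(z) at z* has symmetric part equal to the block-diagonal matrix diag(−A − (s/2)(A² − BᵀB), −C − (s/2)(C² − BBᵀ)). -/
open Matrix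

/-- symmetric part of the Jacobian of the GDA O(s)-resolution field
`G(z) = -F(z) - (s/2) ∇F(z) F(z)` at a stationary point of the saddle-gradient field `F`. -/
theorem stmt4 {n m : ℕ}
    (L : ((Fin n ⊕ Fin m) → ℝ) → ℝ) (hL : ContDiff ℝ 2 L)
    (F : ((Fin n ⊕ Fin m) → ℝ) → ((Fin n ⊕ Fin m) → ℝ))
    (hF : ∀ z, F z = Sum.elim
        (fun i => fderiv ℝ L z (Pi.single (Sum.inl i) 1))
        (fun j => -(fderiv ℝ L z (Pi.single (Sum.inr j) 1))))
    (DF : ((Fin n ⊕ Fin m) → ℝ) → Matrix (Fin n ⊕ Fin m) (Fin n ⊕ Fin m) ℝ)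
    (hDF : ∀ z, HasFDerivAt F ((DF z).mulVecLin.toContinuousLinearMap) z)
    (zstar : (Fin n ⊕ Fin m) → ℝ) (hstat : F zstar = 0)
    (hDF' : DifferentiableAt ℝ (fun z i j => DF z i j) zstar)
    (A : Matrix (Fin n) (Fin n) ℝ) (hA : A.IsSymm)
    (C : Matrix (Fin m) (Fin m) ℝ) (hC : C.IsSymm)
    (B : Matrix (Fin m) (Fin n) ℝ)
    (hblocks : DF zstar = fromBlocks A Bᵀ (-B) C)
    (s : ℝ)
    (G : ((Fin n ⊕ Fin m) → ℝ) → ((Fin n ⊕ Fin m) → ℝ))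
    (hG : ∀ z, G z = -F z - (s/2) • (DF z).mulVec (F z)) :
    ∃ JG : Matrix (Fin n ⊕ Fin m) (Fin n ⊕ Fin m) ℝ,
      HasFDerivAt G (JG.mulVecLin.toContinuousLinearMap) zstar ∧
      (1/2 : ℝ) • (JG + JGᵀ)
        = fromBlocks (-A - (s/2) • (A * A - Bᵀ * B)) 0 0
            (-C - (s/2) • (C * C - B * Bᵀ)) := by
  classical
  set M := DF zstar with hM
  refine ⟨-M - (s/2) • (M * M), ?_, ?_⟩
  · have hFz : ∀ j, F zstar j = 0 := fun j => by rw [hstat]; rfl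
    apply hasFDerivAt_pi''
    intro i
    have hFj : ∀ j : Fin n ⊕ Fin m, HasFDerivAt (fun z => F z j)
        ((ContinuousLinearMap.proj j).comp M.mulVecLin.toContinuousLinearMap) zstar :=
      fun j => hasFDerivAt_pi'.1 (hDF zstar) j
    have hDFij : ∀ i j, DifferentiableAt ℝ (fun z => DF z i j) zstar := by
      intro i j
      exact differentiableAt_pi.1 (differentiableAt_pi.1 hDF' i) j
    have hterm : ∀ j, HasFDerivAt (fun z => DF z i j * F z j)
        (M i j • ((ContinuousLinearMap.proj j).comp M.mulVecLin.toContinuousLinearMap)) zstar := by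
      intro j
      have := ((hDFij i j).hasFDerivAt).fun_mul (hFj j)
      simpa [hFz j] using this
    have hsum : HasFDerivAt (fun z => ∑ j, DF z i j * F z j)
        (∑ j, M i j • ((ContinuousLinearMap.proj j).comp M.mulVecLin.toContinuousLinearMap)) zstar :=
      HasFDerivAt.fun_sum (fun j _ => hterm j)
    have hGi : HasFDerivAt (fun z => G z i)
        (-((ContinuousLinearMap.proj i).comp M.mulVecLin.toContinuousLinearMap)
          - (s/2) • ∑ j, M i j • ((ContinuousLinearMap.proj j).comp M.mulVecLin.toContinuousLinearMap)) zstar := by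
      have heq : (fun z => G z i) = fun z => -(F z i) - (s/2) * ∑ j, DF z i j * F z j := by
        funext z; rw [hG z]
        simp [Matrix.mulVec, dotProduct]
      rw [heq]
      exact ((hFj i).neg).sub (hsum.const_mul (s/2))
    refine hGi.congr_fderiv (Eq.symm ?_)
    refine ContinuousLinearMap.ext fun h => ?_
    simp only [ContinuousLinearMap.comp_apply, ContinuousLinearMap.proj_apply,
      ContinuousLinearMap.sub_apply, ContinuousLinearMap.neg_apply,
      ContinuousLinearMap.smul_apply, ContinuousLinearMap.sum_apply,
      LinearMap.coe_toContinuousLinearMap', Matrix.mulVecLin_apply]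
    rw [Matrix.sub_mulVec, Matrix.neg_mulVec, Matrix.smul_mulVec]
    have : (M * M).mulVec h = M.mulVec (M.mulVec h) := by
      rw [Matrix.mulVec_mulVec]
    simp only [Pi.sub_apply, Pi.neg_apply, Pi.smul_apply, this, smul_eq_mul]
    congr 1
  · rw [hblocks]
    have hA' : Aᵀ = A := hA
    have hC' : Cᵀ = C := hC
    simp only [Matrix.fromBlocks_multiply, Matrix.transpose_sub, Matrix.transpose_neg,
      Matrix.transpose_smul, Matrix.fromBlocks_transpose, Matrix.transpose_mul,
      Matrix.transpose_add, Matrix.transpose_transpose, hA', hC', sub_eq_add_neg,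
      Matrix.mul_neg, Matrix.neg_mul, neg_neg, neg_add,
      Matrix.fromBlocks_neg, Matrix.fromBlocks_smul, Matrix.fromBlocks_add]
    rw [Matrix.fromBlocks_inj]
    refine ⟨?_, ?_, ?_, ?_⟩
    · module
    · module
    · module
    · module
end

section
/- With the same setup (A = ∇²_{xx}L(z*), B = ∇²_{xy}L(z*), C = −∇²_{yy}L(z*), F(z*) = 0), the Jacobian of G(z) = −F(z) + (s/2)∇F(z)F(z) at z* has symmetric part equal to diag(−A + (s/2)(A² − BᵀB), −C + (s/2)(C² − BBᵀ)). In particular, if A − (s/2)(A² − BBᵀ) ≻ 0 and C − (s/2)(C² − BᵀB) ≻ 0, then the symmetric part of the Jacobian is negative definite. -/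
open Matrix

lemma myPosDef_fromBlocks {n m : ℕ} {M : Matrix (Fin n) (Fin n) ℝ} {N : Matrix (Fin m) (Fin m) ℝ}
    (hM : M.PosDef) (hN : N.PosDef) : (fromBlocks M 0 0 N).PosDef := by
  rw [posDef_iff_dotProduct_mulVec]
  constructor
  · show _ = _
    rw [fromBlocks_conjTranspose, hM.1.eq, hN.1.eq]
    simp
  · intro x hx
    rw [fromBlocks_mulVec]
    simp only [Matrix.zero_mulVec, add_zero, zero_add]
    have hx' : star x = Sum.elim (x ∘ Sum.inl) (x ∘ Sum.inr) := by
      ext i; cases i <;> simp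
    rw [hx', sumElim_dotProduct_sumElim]
    rcases (by
      by_contra h
      push_neg at h
      apply hx
      ext i; cases i with
      | inl i => exact congrFun h.1 i
      | inr i => exact congrFun h.2 i : (x ∘ Sum.inl) ≠ 0 ∨ (x ∘ Sum.inr) ≠ 0) with h | h
    · have h1 := hM.dotProduct_mulVec_pos h
      simp only [star_trivial] at h1
      rcases eq_or_ne (x ∘ Sum.inr) 0 with h2 | h2
      · simp [h2] at *; linarith
      · have := hN.dotProduct_mulVec_pos h2; simp only [star_trivial] at this; linarith
    · have h1 := hN.dotProduct_mulVec_pos h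
      simp only [star_trivial] at h1
      rcases eq_or_ne (x ∘ Sum.inl) 0 with h2 | h2
      · simp [h2] at *; linarith
      · have := hM.dotProduct_mulVec_pos h2; simp only [star_trivial] at this; linarith

lemma myDerivQuad {N : Type*} [Fintype N] [DecidableEq N]
    (F : (N → ℝ) → (N → ℝ))
    (DF : (N → ℝ) → Matrix N N ℝ)
    (hDF : ∀ z, HasFDerivAt F ((DF z).mulVecLin.toContinuousLinearMap) z)
    (zstar : N → ℝ) (hstat : F zstar = 0)
    (hDF' : DifferentiableAt ℝ (fun z i j => DF z i j) zstar) :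
    HasFDerivAt (fun z => (DF z).mulVec (F z))
      ((DF zstar * DF zstar).mulVecLin.toContinuousLinearMap) zstar := by
  set D := DF zstar with hD
  apply hasFDerivAt_pi''
  intro i
  have key : ∀ j : N, HasFDerivAt (fun z => DF z i j * F z j)
      ((D i j) • ((ContinuousLinearMap.proj j).comp
        (LinearMap.toContinuousLinearMap D.mulVecLin))) zstar := by
    intro j
    have h1 : HasFDerivAt (fun z => DF z i j)
        ((ContinuousLinearMap.proj j).comp ((ContinuousLinearMap.proj i).comp
          (fderiv ℝ (fun z i j => DF z i j) zstar))) zstar := by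
      have := hDF'.hasFDerivAt
      have h2 := hasFDerivAt_pi'.1 this i
      exact hasFDerivAt_pi'.1 h2 j
    have h2 : HasFDerivAt (fun z => F z j)
        ((ContinuousLinearMap.proj j).comp (LinearMap.toContinuousLinearMap D.mulVecLin)) zstar :=
      hasFDerivAt_pi'.1 (hDF zstar) j
    have := h1.fun_mul h2
    have h0 : F zstar j = 0 := by rw [hstat]; rfl
    simpa [h0] using this
  have hsum := HasFDerivAt.fun_sum (fun j (_ : j ∈ Finset.univ) => key j)
  have hfun : (fun z => (DF z).mulVec (F z) i) = fun z => ∑ j, DF z i j * F z j := by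
    ext z; simp [Matrix.mulVec, dotProduct]
  rw [hfun]
  convert hsum using 1
  ext v
  simp only [ContinuousLinearMap.coe_sum', Finset.sum_apply, ContinuousLinearMap.coe_smul',
    Pi.smul_apply, ContinuousLinearMap.coe_comp', Function.comp_apply,
    ContinuousLinearMap.proj_apply, LinearMap.coe_toContinuousLinearMap', mulVecLin_apply,
    Matrix.mulVec, dotProduct, Matrix.mul_apply, Finset.mul_sum, Finset.sum_mul, smul_eq_mul]
  rw [Finset.sum_comm]
  apply Finset.sum_congr rfl; intro j _
  apply Finset.sum_congr rfl; intro k _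
  ring

/-- symmetric part of the Jacobian of the EGM O(s)-resolution field
`G(z) = -F(z) + (s/2) ∇F(z) F(z)` at a stationary point of the saddle-gradient field `F`. -/
theorem stmt5 {n m : ℕ}
    (L : ((Fin n ⊕ Fin m) → ℝ) → ℝ) (hL : ContDiff ℝ 2 L)
    (F : ((Fin n ⊕ Fin m) → ℝ) → ((Fin n ⊕ Fin m) → ℝ))
    (hF : ∀ z, F z = Sum.elim
        (fun i => fderiv ℝ L z (Pi.single (Sum.inl i) 1))
        (fun j => -(fderiv ℝ L z (Pi.single (Sum.inr j) 1))))
    (DF : ((Fin n ⊕ Fin m) → ℝ) → Matrix (Fin n ⊕ Fin m) (Fin n ⊕ Fin m) ℝ)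
    (hDF : ∀ z, HasFDerivAt F ((DF z).mulVecLin.toContinuousLinearMap) z)
    (zstar : (Fin n ⊕ Fin m) → ℝ) (hstat : F zstar = 0)
    (hDF' : DifferentiableAt ℝ (fun z i j => DF z i j) zstar)
    (A : Matrix (Fin n) (Fin n) ℝ) (hA : A.IsSymm)
    (C : Matrix (Fin m) (Fin m) ℝ) (hC : C.IsSymm)
    (B : Matrix (Fin m) (Fin n) ℝ)
    (hblocks : DF zstar = fromBlocks A Bᵀ (-B) C)
    (s : ℝ)
    (G : ((Fin n ⊕ Fin m) → ℝ) → ((Fin n ⊕ Fin m) → ℝ))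
    (hG : ∀ z, G z = -F z + (s/2) • (DF z).mulVec (F z)) :
    ∃ JG : Matrix (Fin n ⊕ Fin m) (Fin n ⊕ Fin m) ℝ,
      HasFDerivAt G (JG.mulVecLin.toContinuousLinearMap) zstar ∧
      (1/2 : ℝ) • (JG + JGᵀ)
        = fromBlocks (-A + (s/2) • (A * A - Bᵀ * B)) 0 0
            (-C + (s/2) • (C * C - B * Bᵀ))
        ∧ ((A - (s/2) • (A * A - Bᵀ * B)).PosDef → (C - (s/2) • (C * C - B * Bᵀ)).PosDef →
            ((-1 : ℝ) • ((1/2 : ℝ) • (JG + JGᵀ))).PosDef) := by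
  set D := DF zstar with hD
  have heq : (1/2 : ℝ) • ((-D + (s/2) • (D * D)) + (-D + (s/2) • (D * D))ᵀ)
      = fromBlocks (-A + (s/2) • (A * A - Bᵀ * B)) 0 0
          (-C + (s/2) • (C * C - B * Bᵀ)) := by
    rw [hblocks]
    rw [fromBlocks_multiply, fromBlocks_neg, fromBlocks_smul, fromBlocks_add,
      fromBlocks_transpose, fromBlocks_add, fromBlocks_smul]
    apply fromBlocks_inj.2
    refine ⟨?_, ?_, ?_, ?_⟩ <;>
      simp only [transpose_add, transpose_smul, transpose_neg, transpose_mul,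
        transpose_transpose, hA.eq, hC.eq, Matrix.mul_neg, Matrix.neg_mul, neg_neg,
        transpose_zero, smul_add, smul_neg, smul_smul] <;>
      module
  refine ⟨-D + (s/2) • (D * D), ?_, heq, ?_⟩
  · -- the derivative
    have hH := myDerivQuad F DF hDF zstar hstat hDF'
    have hGfun : G = fun z => -F z + (s/2) • (DF z).mulVec (F z) := funext hG
    rw [hGfun]
    have := ((hDF zstar).fun_neg).fun_add (hH.fun_const_smul (s/2))
    refine this.congr_fderiv ?_
    ext v
    simp [Matrix.add_mulVec, Matrix.neg_mulVec, Matrix.smul_mulVec, hD]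
  · intro h1 h2
    rw [heq]
    have hneg : (-1 : ℝ) • (fromBlocks (-A + (s/2) • (A * A - Bᵀ * B)) (0 : Matrix (Fin n) (Fin m) ℝ)
          (0 : Matrix (Fin m) (Fin n) ℝ) (-C + (s/2) • (C * C - B * Bᵀ)))
        = fromBlocks (A - (s/2) • (A * A - Bᵀ * B)) 0 0 (C - (s/2) • (C * C - B * Bᵀ)) := by
      rw [fromBlocks_smul]
      exact fromBlocks_inj.2 ⟨by module, by simp, by simp, by module⟩
    rw [hneg]
    exact myPosDef_fromBlocks h1 h2
end

section
/- Let F(z) = Jz be a linear saddle field with J = [[A, Bᵀ],[−B, C]], A, C symmetric. Suppose A + (s/2)(A² − BᵀB) ≻ 0 and C + (s/2)(C² − BBᵀ) ≻ 0. Then every solution of the ODE ż = −F(z) − (s/2)∇F(z)F(z) = −(J + (s/2)J²)z converges to 0 exponentially: there exists ρ > 0 with ‖z(t)‖ ≤ e^{−ρt}‖z(0)‖. -/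
open Matrix

lemma posdef_lower {ι : Type*} [Fintype ι] [DecidableEq ι] (P : Matrix ι ι ℝ) (hP : P.PosDef) :
    ∃ c > (0:ℝ), ∀ x : ι → ℝ, c * (x ⬝ᵥ x) ≤ x ⬝ᵥ P.mulVec x := by
  cases isEmpty_or_nonempty ι with
  | inl h =>
    exact ⟨1, one_pos, fun x => by simp [dotProduct]⟩
  | inr h =>
    set f : (ι → ℝ) → ℝ := fun x => x ⬝ᵥ P.mulVec x with hf_def
    have hf : Continuous f := by
      apply continuous_finset_sum
      intro i _
      exact (continuous_apply i).mul <| continuous_finset_sum _ fun j _ =>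
        continuous_const.mul (continuous_apply j)
    have hpos : ∀ x : ι → ℝ, x ≠ 0 → 0 < f x := by
      intro x hx
      have := hP.re_dotProduct_pos (𝕜 := ℝ) hx
      simpa [dotProduct, hf_def] using this
    set Sph : Set (ι → ℝ) := {x | x ⬝ᵥ x = 1} with hSph
    have hclosed : IsClosed Sph := by
      have : Continuous fun x : ι → ℝ => x ⬝ᵥ x :=
        continuous_finset_sum _ fun i _ => (continuous_apply i).mul (continuous_apply i)
      exact isClosed_eq this continuous_const
    have hsub : Sph ⊆ Metric.closedBall 0 1 := by
      intro x hx
      simp only [Metric.mem_closedBall, dist_zero_right]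
      rw [pi_norm_le_iff_of_nonneg zero_le_one]
      intro i
      rw [Real.norm_eq_abs, abs_le_one_iff_mul_self_le_one]
      calc x i * x i ≤ ∑ j, x j * x j :=
            Finset.single_le_sum (fun j _ => mul_self_nonneg (x j)) (Finset.mem_univ i)
        _ = 1 := hx
    have hcomp : IsCompact Sph :=
      (isCompact_closedBall 0 1).of_isClosed_subset hclosed hsub
    have hne : Sph.Nonempty := by
      obtain ⟨i⟩ := h
      refine ⟨Pi.single i 1, ?_⟩
      simp [hSph, dotProduct_single]
    obtain ⟨x₀, hx₀, hmin⟩ := hcomp.exists_isMinOn hne hf.continuousOn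
    have hx₀ne : x₀ ≠ 0 := by
      intro h0
      rw [hSph] at hx₀
      simp [h0] at hx₀
    refine ⟨f x₀, hpos x₀ hx₀ne, fun x => ?_⟩
    by_cases hx : x = 0
    · simp [hx, hf_def]
    · have h1 : 0 ≤ x ⬝ᵥ x := Finset.sum_nonneg fun i _ => mul_self_nonneg (x i)
      have hxx : 0 < x ⬝ᵥ x :=
        h1.lt_of_ne fun h2 => hx (dotProduct_self_eq_zero.mp h2.symm)
      set r : ℝ := Real.sqrt (x ⬝ᵥ x) with hr_def
      have hr : 0 < r := Real.sqrt_pos.mpr hxx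
      have hr2 : r * r = x ⬝ᵥ x := Real.mul_self_sqrt h1
      set u : ι → ℝ := r⁻¹ • x with hu_def
      have hu : u ∈ Sph := by
        simp only [hSph, Set.mem_setOf_eq, hu_def, smul_dotProduct, dotProduct_smul,
          smul_eq_mul]
        field_simp
        rw [mul_comm] at hr2
        linarith [hr2]
      have hfu : f u = r⁻¹ * (r⁻¹ * f x) := by
        simp [hf_def, hu_def, smul_dotProduct, dotProduct_smul, mulVec_smul, mul_assoc]
      have hle : f x₀ ≤ f u := hmin hu
      rw [hfu] at hle
      have : f x₀ * (r * r) ≤ f x := by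
        rw [← mul_assoc] at hle
        calc f x₀ * (r * r) ≤ r⁻¹ * r⁻¹ * f x * (r * r) := by
              apply mul_le_mul_of_nonneg_right hle (by positivity)
          _ = f x := by field_simp
      rw [← hr2]
      linarith

theorem stmt15 {n m : ℕ} (s : ℝ) (hs : 0 < s)
    (A : Matrix (Fin n) (Fin n) ℝ) (hA : A.IsSymm)
    (C : Matrix (Fin m) (Fin m) ℝ) (hC : C.IsSymm)
    (B : Matrix (Fin m) (Fin n) ℝ)
    (hApos : (A + (s/2) • (A * A - Bᵀ * B)).PosDef)
    (hCpos : (C + (s/2) • (C * C - B * Bᵀ)).PosDef) :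
    ∃ ρ > (0:ℝ), ∀ z : ℝ → ((Fin n ⊕ Fin m) → ℝ),
      (∀ t, HasDerivAt z
        (-((fromBlocks A Bᵀ (-B) C
            + (s/2) • (fromBlocks A Bᵀ (-B) C * fromBlocks A Bᵀ (-B) C)).mulVec (z t))) t) →
      ∀ t ≥ (0:ℝ), Real.sqrt (z t ⬝ᵥ z t) ≤ Real.exp (-ρ * t) * Real.sqrt (z 0 ⬝ᵥ z 0) := by
  set J : Matrix (Fin n ⊕ Fin m) (Fin n ⊕ Fin m) ℝ := fromBlocks A Bᵀ (-B) C with hJ_def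
  set M : Matrix (Fin n ⊕ Fin m) (Fin n ⊕ Fin m) ℝ := J + (s/2) • (J * J) with hM_def
  set P : Matrix (Fin n) (Fin n) ℝ := A + (s/2) • (A * A - Bᵀ * B) with hP_def
  set Q : Matrix (Fin m) (Fin m) ℝ := C + (s/2) • (C * C - B * Bᵀ) with hQ_def
  have hJT : Jᵀ = fromBlocks A (-Bᵀ) B C := by
    rw [hJ_def, fromBlocks_transpose, hA, hC, transpose_neg, transpose_transpose]
  have hSym : (1/2 : ℝ) • (M + Mᵀ) = fromBlocks P 0 0 Q := by
    rw [hM_def, transpose_add, transpose_smul, transpose_mul, hJT, hJ_def]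
    simp only [fromBlocks_multiply, fromBlocks_add, fromBlocks_smul, hP_def, hQ_def]
    rw [fromBlocks_inj]
    refine ⟨?_, ?_, ?_, ?_⟩ <;> simp only [Matrix.mul_neg, Matrix.neg_mul, neg_neg] <;> module
  have hMT : ∀ v : (Fin n ⊕ Fin m) → ℝ, v ⬝ᵥ Mᵀ.mulVec v = v ⬝ᵥ M.mulVec v := by
    intro v
    rw [mulVec_transpose, dotProduct_comm, dotProduct_mulVec]
  have hquad : ∀ v : (Fin n ⊕ Fin m) → ℝ,
      v ⬝ᵥ M.mulVec v =
        (v ∘ Sum.inl) ⬝ᵥ P.mulVec (v ∘ Sum.inl) + (v ∘ Sum.inr) ⬝ᵥ Q.mulVec (v ∘ Sum.inr) := by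
    intro v
    have h1 : v ⬝ᵥ ((1/2 : ℝ) • (M + Mᵀ)).mulVec v = v ⬝ᵥ M.mulVec v := by
      rw [smul_mulVec, add_mulVec, dotProduct_smul, dotProduct_add, hMT, smul_eq_mul]
      ring
    rw [← h1, hSym]
    conv_lhs => rw [← Sum.elim_comp_inl_inr v]
    rw [fromBlocks_mulVec, sumElim_dotProduct_sumElim]
    simp
  have hsplit : ∀ v : (Fin n ⊕ Fin m) → ℝ,
      v ⬝ᵥ v = (v ∘ Sum.inl) ⬝ᵥ (v ∘ Sum.inl) + (v ∘ Sum.inr) ⬝ᵥ (v ∘ Sum.inr) := by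
    intro v
    conv_lhs => rw [← Sum.elim_comp_inl_inr v]
    rw [sumElim_dotProduct_sumElim]
  obtain ⟨c₁, hc₁, hPlow⟩ := posdef_lower P hApos
  obtain ⟨c₂, hc₂, hQlow⟩ := posdef_lower Q hCpos
  set ρ : ℝ := min c₁ c₂ with hρ_def
  have hρ : 0 < ρ := lt_min hc₁ hc₂
  have hlow : ∀ v : (Fin n ⊕ Fin m) → ℝ, ρ * (v ⬝ᵥ v) ≤ v ⬝ᵥ M.mulVec v := by
    intro v
    rw [hquad, hsplit, mul_add]
    have h1 : (0:ℝ) ≤ (v ∘ Sum.inl) ⬝ᵥ (v ∘ Sum.inl) :=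
      Finset.sum_nonneg fun i _ => mul_self_nonneg _
    have h2 : (0:ℝ) ≤ (v ∘ Sum.inr) ⬝ᵥ (v ∘ Sum.inr) :=
      Finset.sum_nonneg fun i _ => mul_self_nonneg _
    have := hPlow (v ∘ Sum.inl)
    have := hQlow (v ∘ Sum.inr)
    have l1 : ρ * ((v ∘ Sum.inl) ⬝ᵥ (v ∘ Sum.inl)) ≤ c₁ * ((v ∘ Sum.inl) ⬝ᵥ (v ∘ Sum.inl)) :=
      mul_le_mul_of_nonneg_right (min_le_left _ _) h1
    have l2 : ρ * ((v ∘ Sum.inr) ⬝ᵥ (v ∘ Sum.inr)) ≤ c₂ * ((v ∘ Sum.inr) ⬝ᵥ (v ∘ Sum.inr)) :=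
      mul_le_mul_of_nonneg_right (min_le_right _ _) h2
    linarith
  refine ⟨ρ, hρ, fun z hz => ?_⟩
  set V : ℝ → ℝ := fun t => z t ⬝ᵥ z t with hV_def
  have hzi : ∀ (i : Fin n ⊕ Fin m) (t : ℝ),
      HasDerivAt (fun t => z t i) (-(M.mulVec (z t)) i) t := by
    intro i t
    exact (ContinuousLinearMap.proj (R := ℝ) (φ := fun _ : Fin n ⊕ Fin m => ℝ)
      i).hasFDerivAt.comp_hasDerivAt t (hz t)
  have hVd : ∀ t, HasDerivAt V (-(2 * (z t ⬝ᵥ M.mulVec (z t)))) t := by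
    intro t
    have : HasDerivAt V (∑ i, ((-(M.mulVec (z t)) i) * z t i + z t i * (-(M.mulVec (z t)) i))) t := by
      exact HasDerivAt.fun_sum fun i _ => (hzi i t).mul (hzi i t)
    convert this using 1
    simp only [dotProduct, Pi.neg_apply, Finset.mul_sum]
    rw [← Finset.sum_neg_distrib]
    exact Finset.sum_congr rfl fun i _ => by ring
  set u : ℝ → ℝ := fun t => Real.exp (2 * ρ * t) * V t with hu_def
  have hud : ∀ t, HasDerivAt u
      (Real.exp (2 * ρ * t) * (2 * ρ) * V t
        + Real.exp (2 * ρ * t) * (-(2 * (z t ⬝ᵥ M.mulVec (z t))))) t := by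
    intro t
    have := (((hasDerivAt_id t).const_mul (2 * ρ)).exp).mul (hVd t)
    simp only [id_eq, mul_one] at this
    exact this
  have hud_nonpos : ∀ t, Real.exp (2 * ρ * t) * (2 * ρ) * V t
        + Real.exp (2 * ρ * t) * (-(2 * (z t ⬝ᵥ M.mulVec (z t)))) ≤ 0 := by
    intro t
    have h1 := hlow (z t)
    have h2 : (0:ℝ) < Real.exp (2 * ρ * t) := Real.exp_pos _
    have : V t = z t ⬝ᵥ z t := rfl
    nlinarith [h1, h2]
  have hanti : AntitoneOn u (Set.Ici (0:ℝ)) := by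
    apply antitoneOn_of_deriv_nonpos (convex_Ici 0)
    · exact Continuous.continuousOn
        (continuous_iff_continuousAt.mpr fun t => (hud t).continuousAt)
    · intro x hx
      exact (hud x).differentiableAt.differentiableWithinAt
    · intro x hx
      rw [HasDerivAt.deriv (hud x)]
      exact hud_nonpos x
  intro t ht
  have hut : u t ≤ u 0 := hanti (Set.self_mem_Ici) ht ht
  have hu0 : u 0 = V 0 := by simp [hu_def]
  have hVt : V t ≤ Real.exp (-(2 * ρ * t)) * V 0 := by
    have h2 : (0:ℝ) < Real.exp (2 * ρ * t) := Real.exp_pos _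
    have hut' : Real.exp (2 * ρ * t) * V t ≤ V 0 := by
      simpa [hu_def] using hut
    rw [Real.exp_neg]
    calc V t = (Real.exp (2 * ρ * t))⁻¹ * (Real.exp (2 * ρ * t) * V t) := by
          field_simp
      _ ≤ (Real.exp (2 * ρ * t))⁻¹ * V 0 := by
          apply mul_le_mul_of_nonneg_left _ (by positivity)
          exact hut'
  have hVnonneg : ∀ r : ℝ, 0 ≤ V r := fun r =>
    Finset.sum_nonneg fun i _ => mul_self_nonneg _
  have hsq : Real.sqrt (V t) ≤ Real.sqrt (Real.exp (-(2 * ρ * t)) * V 0) :=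
    Real.sqrt_le_sqrt hVt
  have hexp : Real.sqrt (Real.exp (-(2 * ρ * t))) = Real.exp (-ρ * t) := by
    rw [show -(2 * ρ * t) = (-ρ * t) + (-ρ * t) by ring, Real.exp_add,
      Real.sqrt_mul_self (Real.exp_nonneg _)]
  calc Real.sqrt (z t ⬝ᵥ z t) = Real.sqrt (V t) := rfl
    _ ≤ Real.sqrt (Real.exp (-(2 * ρ * t)) * V 0) := hsq
    _ = Real.exp (-ρ * t) * Real.sqrt (V 0) := by
        rw [Real.sqrt_mul (Real.exp_nonneg _), hexp]
    _ = Real.exp (-ρ * t) * Real.sqrt (z 0 ⬝ᵥ z 0) := rfl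
end

section
/- Let Σ, Σ' be positive semidefinite n×n matrices with Σ ⪰ Σ'. For the block matrix J(α, s) = [[−(α + (s/2)(α² − 1/4))I, (1/2)I + (s/16)Σ'], [−(1/2)I − (s/16)Σ', (1/4)(Σ − Σ') − αI + (s/2)((1/4)I + ((1/4)(Σ−Σ') + αI)((1/4)(Σ−Σ') − αI))]], at α = 0 and any s > 0, J(0, s) has an eigenvalue with positive real part, because its trace is positive: tr J(0,s) = (ns/8) + (1/4)tr(Σ − Σ') + (s/2)(n/4 + (1/16)tr((Σ−Σ')²)) > 0. -/
open Matrix Polynomial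

/-- Jacobian of the O(s)-resolution GDA dynamics at the origin of the regularized
one-layer Gaussian GAN, with data covariance `S`, latent covariance `S'`,
regularization `α` and stepsize `s`. -/
noncomputable def ganJacobian {n : ℕ} (S S' : Matrix (Fin n) (Fin n) ℝ) (α s : ℝ) :
    Matrix (Fin n ⊕ Fin n) (Fin n ⊕ Fin n) ℝ :=
  fromBlocks
    (-(α + (s/2) * (α ^ 2 - 1/4)) • (1 : Matrix (Fin n) (Fin n) ℝ))
    ((1/2 : ℝ) • (1 : Matrix (Fin n) (Fin n) ℝ) + (s/16) • S')
    (-((1/2 : ℝ) • (1 : Matrix (Fin n) (Fin n) ℝ) + (s/16) • S'))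
    ((1/4 : ℝ) • (S - S') - α • (1 : Matrix (Fin n) (Fin n) ℝ)
      + (s/2) • ((1/4 : ℝ) • (1 : Matrix (Fin n) (Fin n) ℝ)
          + ((1/4 : ℝ) • (S - S') + α • (1 : Matrix (Fin n) (Fin n) ℝ))
            * ((1/4 : ℝ) • (S - S') - α • (1 : Matrix (Fin n) (Fin n) ℝ))))

lemma trace_fromBlocks' {n : ℕ} (A B C D : Matrix (Fin n) (Fin n) ℝ) :
    (fromBlocks A B C D).trace = A.trace + D.trace := by
  simp [Matrix.trace, Fintype.sum_sum_type, Matrix.diag]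

lemma psd_trace_nonneg {n : ℕ} {A : Matrix (Fin n) (Fin n) ℝ} (hA : A.PosSemidef) :
    0 ≤ A.trace := by
  apply Finset.sum_nonneg
  intro i _
  have := hA.dotProduct_mulVec_nonneg (Pi.single i 1)
  simpa [Matrix.mulVec, dotProduct, Pi.single_apply] using this

theorem stmt17 {n : ℕ} (hn : 0 < n)
    (S S' : Matrix (Fin n) (Fin n) ℝ)
    (hS : S.PosSemidef) (hS' : S'.PosSemidef) (hSS' : (S - S').PosSemidef)
    (s : ℝ) (hs : 0 < s) :
    (ganJacobian S S' 0 s).trace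
        = (n : ℝ) * s / 8 + (1/4) * (S - S').trace
          + (s/2) * ((n : ℝ) / 4 + (1/16) * ((S - S') * (S - S')).trace) ∧
    0 < (ganJacobian S S' 0 s).trace ∧
    ∃ μ ∈ ((ganJacobian S S' 0 s).map (Complex.ofReal ·)).charpoly.roots,
      0 < μ.re := by
  have htr : (ganJacobian S S' 0 s).trace
      = (n : ℝ) * s / 8 + (1/4) * (S - S').trace
        + (s/2) * ((n : ℝ) / 4 + (1/16) * ((S - S') * (S - S')).trace) := by
    rw [ganJacobian, trace_fromBlocks']
    simp only [zero_smul, add_zero, sub_zero, zero_add, ne_eq, zero_pow, OfNat.ofNat_ne_zero,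
      not_false_eq_true, zero_sub, mul_neg, neg_neg, Matrix.smul_mul, Matrix.mul_smul,
      smul_smul, trace_smul, trace_add, trace_one, trace_sub, smul_eq_mul,
      Fintype.card_fin]
    ring
  have hA : 0 ≤ (S - S').trace := psd_trace_nonneg hSS'
  have hA2 : 0 ≤ ((S - S') * (S - S')).trace := by
    have h := posSemidef_conjTranspose_mul_self (S - S')
    rw [show (S - S')ᴴ = S - S' from hSS'.1] at h
    exact psd_trace_nonneg h
  have hpos : 0 < (ganJacobian S S' 0 s).trace := by
    rw [htr]
    have hn1 : (1 : ℝ) ≤ (n : ℝ) := by exact_mod_cast hn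
    nlinarith
  refine ⟨htr, hpos, ?_⟩
  set M := (ganJacobian S S' 0 s).map (Complex.ofReal ·) with hM
  have htrM : M.trace = ((ganJacobian S S' 0 s).trace : ℂ) := by
    simp [hM, Matrix.trace, Matrix.diag, Matrix.map_apply]
  by_contra h
  push_neg at h
  have hsum : M.charpoly.roots.sum.re ≤ 0 := by
    rw [show M.charpoly.roots.sum.re
        = (M.charpoly.roots.map Complex.re).sum by
      simpa using (map_multiset_sum Complex.reAddGroupHom M.charpoly.roots)]
    have : 0 ≤ (M.charpoly.roots.map (fun μ => -μ.re)).sum := by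
      apply Multiset.sum_nonneg
      intro x hx
      obtain ⟨μ, hμ, rfl⟩ := Multiset.mem_map.mp hx
      linarith [h μ hμ]
    have heq : (M.charpoly.roots.map (fun μ => -μ.re)).sum
        = -(M.charpoly.roots.map Complex.re).sum := by
      rw [← Multiset.sum_map_neg', Multiset.map_map]
      rfl
    linarith [heq ▸ this]
  rw [← Matrix.trace_eq_sum_roots_charpoly, htrM] at hsum
  simp only [Complex.ofReal_re] at hsum
  linarith
end
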